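/- With k = κ(n) = max{1, ⌈log₂ n − 2log₂log₂ n⌉}, the graph Z*_n = Z_{n,κ(n)} has diameter at most (1 + (2log₂log₂ n + 1)/(log₂ n − 2log₂log₂ n − 1) + 1/log₂ n) · n/log₂ n, which is (1+o(1)) n/log₂ n. -/

import Mathlib

open SimpleGraph

/-- `κ(n)`: `0` for `n ≤ 1`, and `max{1, ⌈log₂ n − 2 log₂ log₂ n⌉}` for `n ≥ 2`. -/
noncomputable def kappa (n : ℕ) : ℕ :=
  if n ≤ 1 then 0
  else max 1 (Int.toNat ⌈Real.logb 2 (n : ℝ) - 2 * Real.logb 2 (Real.logb 2 (n : ℝ))⌉)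

/-- XOR the first `k` bits with the last `k` bits of a binary string of length `n`. -/
def phiAux (n k : ℕ) (x : Fin n → ZMod 2) : Fin n → ZMod 2 :=
  fun i => if h : i.val < k ∧ n - k + i.val < n then x i + x ⟨n - k + i.val, h.2⟩ else x i

/-- The permutation `φ` on `Z₂ⁿ`. -/
noncomputable def phi (n : ℕ) : (Fin n → ZMod 2) → (Fin n → ZMod 2) := phiAux n (kappa n)

/-- The Z-cube `H_n`, a graph on the binary strings of length `n`.  Bit `0` is the
"first" bit; `Fin.tail x` is the string `x` with its first bit removed. -/
noncomputable def Zcube : (n : ℕ) → SimpleGraph (Fin n → ZMod 2)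
  | 0 => ⊥
  | (n + 1) =>
    { Adj := fun x y =>
        (x 0 = y 0 ∧ (Zcube n).Adj (Fin.tail x) (Fin.tail y)) ∨
        (x 0 ≠ y 0 ∧ (Fin.tail y = phi n (Fin.tail x) ∨ Fin.tail x = phi n (Fin.tail y))),
      symm := by
        constructor
        rintro x y (⟨h1, h2⟩ | ⟨h1, h2⟩)
        · exact Or.inl ⟨h1.symm, (Zcube n).adj_symm h2⟩
        · exact Or.inr ⟨h1.symm, h2.symm⟩
      loopless := by
        constructor
        rintro x (⟨h1, h2⟩ | ⟨h1, h2⟩)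
        · exact (Zcube n).loopless.irrefl _ h2
        · exact h1 rfl }
/-- `σ_n = Σ_{j ∈ S(n)} j / κ(j)²`, where `S(n) = {j ≤ n : κ(j) = κ(j−1)+1}`. -/
noncomputable def sigmaZ (n : ℕ) : ℝ :=
  ∑ j ∈ (Finset.range (n + 1)).filter (fun j => kappa j = kappa (j - 1) + 1),
    (j : ℝ) / (kappa j : ℝ) ^ 2

/-- The last `k` bits of a binary string of length `n` (for `k ≤ n`). -/
def lastBits (k n : ℕ) (v : Fin n → ZMod 2) : Fin k → ZMod 2 :=
  fun i => if h : n - k + i.val < n then v ⟨n - k + i.val, h⟩ else 0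

/-- A walk in `H_n` is `k`-robust if every binary string of length `k` occurs as the
last `k` bits of some vertex of the walk. -/
def IsRobustWalk (k : ℕ) {n : ℕ} {x y : Fin n → ZMod 2} (W : (Zcube n).Walk x y) : Prop :=
  ∀ z : Fin k → ZMod 2, ∃ v ∈ W.support, lastBits k n v = z

/-- The permutation `φ_k` on `Z₂ⁿ`. -/
def phiK (k n : ℕ) (x : Fin n → ZMod 2) : Fin n → ZMod 2 :=
  if n ≤ k then x
  else if n ≤ 2 * k then
    fun i => if h : i.val < n - k ∧ k + i.val < n then x i + x ⟨k + i.val, h.2⟩ else x i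
  else
    fun i => if h : i.val < k ∧ n - k + i.val < n then x i + x ⟨n - k + i.val, h.2⟩ else x i

/-- The Z-cube `Z_{n,k}`. -/
def ZcubeK (k : ℕ) : (n : ℕ) → SimpleGraph (Fin n → ZMod 2)
  | 0 => ⊥
  | (n + 1) =>
    { Adj := fun x y =>
        (x 0 = y 0 ∧ (ZcubeK k n).Adj (Fin.tail x) (Fin.tail y)) ∨
        (x 0 ≠ y 0 ∧ (Fin.tail y = phiK k n (Fin.tail x) ∨ Fin.tail x = phiK k n (Fin.tail y))),
      symm := by
        constructor
        rintro x y (⟨h1, h2⟩ | ⟨h1, h2⟩)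
        · exact Or.inl ⟨h1.symm, (ZcubeK k n).adj_symm h2⟩
        · exact Or.inr ⟨h1.symm, h2.symm⟩
      loopless := by
        constructor
        rintro x (⟨h1, h2⟩ | ⟨h1, h2⟩)
        · exact (ZcubeK k n).loopless.irrefl _ h2
        · exact h1 rfl }

/-- The subgraph of `H_n` consisting of the cross edges, i.e. the edges between the
two copies `0H_{n−1}` and `1H_{n−1}` (edges whose endpoints differ in the first bit). -/
noncomputable def crossSubgraph (n : ℕ) : (Zcube n).Subgraph where
  verts := Set.univ
  Adj x y := ∃ h : 0 < n, (Zcube n).Adj x y ∧ x ⟨0, h⟩ ≠ y ⟨0, h⟩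
  adj_sub := by rintro x y ⟨h, h1, h2⟩; exact h1
  edge_vert := by intro x y _; trivial
  symm := by constructor; rintro x y ⟨h, h1, h2⟩; exact ⟨h, h1.symm, h2.symm⟩

/-- A graph is Hamiltonian connected if any two distinct vertices are joined by a
Hamiltonian path. -/
def HamiltonianConnected {V : Type*} [DecidableEq V] (G : SimpleGraph V) : Prop :=
  ∀ x y : V, x ≠ y → ∃ p : G.Walk x y, p.IsHamiltonian

/-- The graph obtained from two disjoint copies of `G` by adding the perfect matching
`(u, false) ∼ (ψ u, true)` given by a bijection `ψ`. -/
def matchingJoin {V : Type*} (G : SimpleGraph V) (ψ : V ≃ V) : SimpleGraph (V × Bool) where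
  Adj a b := (a.2 = b.2 ∧ G.Adj a.1 b.1) ∨
    (a.2 = false ∧ b.2 = true ∧ b.1 = ψ a.1) ∨
    (a.2 = true ∧ b.2 = false ∧ a.1 = ψ b.1)
  symm := by
    constructor
    rintro ⟨u, i⟩ ⟨v, j⟩ (⟨h1, h2⟩ | ⟨h1, h2, h3⟩ | ⟨h1, h2, h3⟩)
    · exact Or.inl ⟨h1.symm, h2.symm⟩
    · exact Or.inr (Or.inr ⟨h2, h1, h3⟩)
    · exact Or.inr (Or.inl ⟨h2, h1, h3⟩)
  loopless := by
    constructor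
    rintro ⟨u, i⟩ (⟨h1, h2⟩ | ⟨h1, h2, h3⟩ | ⟨h1, h2, h3⟩)
    · exact G.loopless.irrefl _ h2
    · simp_all
    · simp_all

def cmove (k n : ℕ) (d : ℕ) (x : Fin n → ZMod 2) : Fin n → ZMod 2 :=
  fun i =>
    if i.val = d then x i + 1
    else if h : d < i.val ∧ i.val ≤ d + min k (n - d - 1 - k) then
      x i + x ⟨i.val + max k (n - d - 1 - k), by omega⟩
    else x i

lemma zmod2_ne_add_one : ∀ a : ZMod 2, a ≠ a + 1 := by decide

lemma phiK_apply (k m : ℕ) (t : Fin m → ZMod 2) (j : Fin m) :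
    phiK k m t j =
      if h : (j:ℕ) < min k (m - k) then t j + t ⟨(j:ℕ) + max k (m - k), by omega⟩ else t j := by
  rcases le_or_gt m k with h1 | h1
  · simp only [phiK, if_pos h1]
    rw [dif_neg (by omega)]
  · rcases le_or_gt m (2*k) with h2 | h2
    · simp only [phiK, if_neg (by omega : ¬ m ≤ k), if_pos h2]
      by_cases hc : (j:ℕ) < m - k ∧ k + (j:ℕ) < m
      · rw [dif_pos hc, dif_pos (by omega)]
        congr 1
        exact congrArg t (Fin.ext (by simp only []; omega))
      · rw [dif_neg hc, dif_neg (by omega)]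
    · simp only [phiK, if_neg (by omega : ¬ m ≤ k), if_neg (by omega : ¬ m ≤ 2*k)]
      by_cases hc : (j:ℕ) < k ∧ m - k + (j:ℕ) < m
      · rw [dif_pos hc, dif_pos (by omega)]
        congr 1
        exact congrArg t (Fin.ext (by simp only []; omega))
      · rw [dif_neg hc, dif_neg (by omega)]

lemma cmove_apply (k n d : ℕ) (x : Fin n → ZMod 2) (i : Fin n) :
    cmove k n d x i =
      if i.val = d then x i + 1
      else if h : d < i.val ∧ i.val ≤ d + min k (n - d - 1 - k) then
        x i + x ⟨i.val + max k (n - d - 1 - k), by omega⟩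
      else x i := rfl

lemma tail_cmove_zero (k m : ℕ) (x : Fin (m+1) → ZMod 2) :
    Fin.tail (cmove k (m+1) 0 x) = phiK k m (Fin.tail x) := by
  funext j
  rw [phiK_apply]
  show cmove k (m+1) 0 x j.succ = _
  rw [cmove_apply]
  have hv : (j.succ : ℕ) = (j : ℕ) + 1 := rfl
  have harith : m + 1 - 0 - 1 - k = m - k := by omega
  by_cases hc : (j:ℕ) < min k (m - k)
  · rw [if_neg (by omega), dif_pos (by rw [hv, harith]; omega), dif_pos hc]
    have : Fin.tail x ⟨(j:ℕ) + max k (m - k), by omega⟩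
        = x ⟨(j.succ:ℕ) + max k (m + 1 - 0 - 1 - k), by omega⟩ := by
      show x _ = x _
      exact congrArg x (Fin.ext (by simp only [Fin.val_succ, harith]; omega))
    rw [← this]
    rfl
  · rw [if_neg (by omega), dif_neg (by rw [hv, harith]; omega), dif_neg hc]
    rfl

lemma tail_cmove_succ (k m e : ℕ) (x : Fin (m+1) → ZMod 2) :
    Fin.tail (cmove k (m+1) (e+1) x) = cmove k m e (Fin.tail x) := by
  funext j
  show cmove k (m+1) (e+1) x j.succ = _
  rw [cmove_apply, cmove_apply]
  have hv : (j.succ : ℕ) = (j : ℕ) + 1 := rfl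
  have harith : m + 1 - (e+1) - 1 - k = m - e - 1 - k := by omega
  by_cases h1 : (j:ℕ) = e
  · rw [if_pos (by omega), if_pos h1]; rfl
  · rw [if_neg (by omega), if_neg h1]
    by_cases h2 : e < (j:ℕ) ∧ (j:ℕ) ≤ e + min k (m - e - 1 - k)
    · rw [dif_pos (by rw [hv, harith]; omega), dif_pos h2]
      have : Fin.tail x ⟨(j:ℕ) + max k (m - e - 1 - k), by omega⟩
          = x ⟨(j.succ:ℕ) + max k (m + 1 - (e+1) - 1 - k), by omega⟩ := by
        show x _ = x _
        exact congrArg x (Fin.ext (by simp only [Fin.val_succ, harith]; omega))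
      rw [← this]
      rfl
    · rw [dif_neg (by rw [hv, harith]; omega), dif_neg h2]
      rfl

lemma adj_cmove (k : ℕ) : ∀ (n : ℕ) (d : ℕ), d < n → ∀ (x : Fin n → ZMod 2),
    (ZcubeK k n).Adj x (cmove k n d x) := by
  intro n
  induction n with
  | zero => intro d hd; omega
  | succ m ih =>
    intro d hd x
    match d with
    | 0 =>
      refine Or.inr ⟨?_, Or.inl (tail_cmove_zero k m x)⟩
      have : cmove k (m+1) 0 x 0 = x 0 + 1 := by
        rw [cmove_apply, if_pos (show ((0: Fin (m+1)):ℕ) = 0 from rfl)]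
      rw [this]; exact zmod2_ne_add_one _
    | (e+1) =>
      refine Or.inl ⟨?_, ?_⟩
      · rw [cmove_apply]
        rw [if_neg (by simp), dif_neg (by simp)]
      · rw [tail_cmove_succ]
        exact ih e (by omega) (Fin.tail x)
section T2
variable (k n : ℕ) (M : ℕ → Fin k → ZMod 2)

def lastBits' (v : Fin n → ZMod 2) : Fin k → ZMod 2 :=
  fun i => if h : n - k + i.val < n then v ⟨n - k + i.val, h⟩ else 0

def delta (p : ℕ) : Fin n → ZMod 2 :=
  fun i => if i.val = p then 1
    else if h : p < i.val ∧ i.val ≤ p + k then M p ⟨i.val - p - 1, by omega⟩ else 0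

def sumDelta : List ℕ → (Fin n → ZMod 2)
  | [] => 0
  | p :: P => delta k n M p + sumDelta P

def eflip (j : Fin k) : Fin n → ZMod 2 := fun i => if i.val = n - k + j.val then 1 else 0

def unitv (j : Fin k) : Fin k → ZMod 2 := fun i => if i = j then 1 else 0

def Step (g g' : Fin k → ZMod 2) : Prop := ∃ j : Fin k, g' = g + unitv k j

lemma lastBits'_add (x w : Fin n → ZMod 2) :
    lastBits' k n (x + w) = lastBits' k n x + lastBits' k n w := by
  funext i
  simp only [lastBits', Pi.add_apply]
  split_ifs with h
  · rfl
  · simp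

lemma lastBits'_delta (p : ℕ) (hp : p + 2*k + 2 ≤ n) : lastBits' k n (delta k n M p) = 0 := by
  funext i
  simp only [lastBits', delta]
  split_ifs with h h1 h2
  · omega
  · omega
  · rfl
  · rfl

lemma lastBits'_eflip (j : Fin k) (hk : 2*k + 2 ≤ n) :
    lastBits' k n (eflip k n j) = unitv k j := by
  funext i
  simp only [lastBits', eflip, unitv]
  rw [dif_pos (by omega)]
  by_cases h : i = j
  · rw [if_pos (by subst h; rfl), if_pos h]
  · rw [if_neg (by intro hc; exact h (Fin.ext (by omega))), if_neg h]

lemma cmove_eq_add_delta (p : ℕ) (hp : p + 2*k + 2 ≤ n) (x : Fin n → ZMod 2)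
    (hl : lastBits' k n x = M p) : cmove k n p x = x + delta k n M p := by
  funext i
  rw [cmove_apply, Pi.add_apply, delta]
  by_cases h1 : (i:ℕ) = p
  · rw [if_pos h1, if_pos h1]
  · rw [if_neg h1, if_neg h1]
    have hmin : min k (n - p - 1 - k) = k := by omega
    by_cases h2 : p < (i:ℕ) ∧ (i:ℕ) ≤ p + k
    · rw [dif_pos (by omega), dif_pos h2]
      congr 1
      have : M p ⟨(i:ℕ) - p - 1, by omega⟩ = lastBits' k n x ⟨(i:ℕ) - p - 1, by omega⟩ := by
        rw [hl]
      rw [this]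
      simp only [lastBits']
      rw [dif_pos (by omega)]
      exact congrArg x (Fin.ext (by simp only []; omega))
    · rw [dif_neg (by omega), dif_neg h2]
      simp

lemma cmove_eq_add_eflip (j : Fin k) (hk : 2*k + 2 ≤ n) (x : Fin n → ZMod 2) :
    cmove k n (n - k + j.val) x = x + eflip k n j := by
  funext i
  rw [cmove_apply, Pi.add_apply, eflip]
  by_cases h1 : (i:ℕ) = n - k + j.val
  · rw [if_pos h1, if_pos h1]
  · rw [if_neg h1, if_neg h1]
    have hj : (j:ℕ) < k := j.isLt
    rw [dif_neg (by omega)]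
    simp

lemma adj_edist_le_one {V : Type*} {G : SimpleGraph V} {x y : V} (h : G.Adj x y) :
    G.edist x y ≤ 1 := by
  have := SimpleGraph.edist_le h.toWalk
  simpa using this

lemma zmod2_eq_add_one {a b : ZMod 2} (h : a ≠ b) : b = a + 1 := by revert h; revert a b; decide

/-- prefix agreement lemma -/
lemma edist_le_of_agree : ∀ (m : ℕ) (x y : Fin n → ZMod 2),
    (∀ i : Fin n, (i:ℕ) < n - m → x i = y i) → (ZcubeK k n).edist x y ≤ m := by
  intro m
  induction m using Nat.strong_induction_on with
  | _ m ih =>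
    intro x y hagree
    by_cases hxy : x = y
    · subst hxy; simp [SimpleGraph.edist_self]
    · have hm : 1 ≤ m := by
        rcases Nat.eq_zero_or_pos m with h | h
        · exfalso; apply hxy; funext i; exact hagree i (by omega)
        · exact h
      have hex : ∃ j, ∃ h : j < n, x ⟨j, h⟩ ≠ y ⟨j, h⟩ := by
        by_contra hc
        push_neg at hc
        exact hxy (funext fun i => hc i.val i.isLt)
      classical
      let d := Nat.find hex
      obtain ⟨hdn, hdne⟩ : ∃ h : d < n, x ⟨d, h⟩ ≠ y ⟨d, h⟩ := Nat.find_spec hex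
      have hmin : ∀ j (hj : j < n), j < d → x ⟨j, hj⟩ = y ⟨j, hj⟩ := by
        intro j hj hjd
        by_contra hc
        exact Nat.find_min hex hjd ⟨hj, hc⟩
      have hdm : n - m ≤ d := by
        by_contra hc
        exact hdne (hagree ⟨d, hdn⟩ (by show d < n - m; omega))
      set z := cmove k n d x with hz
      have hadj : (ZcubeK k n).Adj x z := adj_cmove k n d hdn x
      have hz_agree : ∀ i : Fin n, (i:ℕ) < n - (n - d - 1) → z i = y i := by
        intro i hi
        have hi' : (i:ℕ) ≤ d := by omega
        rcases Nat.lt_or_ge (i:ℕ) d with h | h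
        · have : z i = x i := by
            rw [hz, cmove_apply, if_neg (by omega), dif_neg (by omega)]
          rw [this]
          have := hmin (i:ℕ) i.isLt h
          simpa using this
        · have hid : (i:ℕ) = d := by omega
          have hzi : z i = x i + 1 := by rw [hz, cmove_apply, if_pos hid]
          rw [hzi]
          have hxi : x i ≠ y i := by
            have : i = ⟨d, hdn⟩ := Fin.ext hid
            rw [this]; exact hdne
          exact (zmod2_eq_add_one hxi).symm
      have hlt : n - d - 1 < m := by omega
      have h2 := ih (n - d - 1) hlt z y hz_agree
      calc (ZcubeK k n).edist x y ≤ (ZcubeK k n).edist x z + (ZcubeK k n).edist z y :=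
            SimpleGraph.edist_triangle
        _ ≤ 1 + (n - d - 1 : ℕ) := add_le_add (adj_edist_le_one hadj) h2
        _ ≤ (m : ℕ∞) := by
            rw [← Nat.cast_one, ← Nat.cast_add]
            exact_mod_cast (by omega : 1 + (n - d - 1) ≤ m)

lemma lastBits'_sumDelta : ∀ (P : List ℕ), (∀ p ∈ P, p + 2*k + 2 ≤ n) →
    lastBits' k n (sumDelta k n M P) = 0 := by
  intro P
  induction P with
  | nil => intro _; funext i; simp [sumDelta, lastBits']
  | cons p P ihp =>
    intro h
    rw [sumDelta, lastBits'_add, lastBits'_delta k n M p (h p (by simp)),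
      ihp (fun q hq => h q (by simp [hq]))]
    simp

lemma GP1 : ∀ (P : List ℕ) (x : Fin n → ZMod 2) (g : Fin k → ZMod 2),
    lastBits' k n x = g → (∀ p ∈ P, p + 2*k + 2 ≤ n ∧ M p = g) →
    (ZcubeK k n).edist x (x + sumDelta k n M P) ≤ P.length := by
  intro P
  induction P with
  | nil => intro x g _ _; simp [sumDelta, SimpleGraph.edist_self]
  | cons p P ihp =>
    intro x g hlast hP
    obtain ⟨hp1, hp2⟩ := hP p (by simp)
    set z := x + delta k n M p with hzdef
    have hcm : cmove k n p x = z := cmove_eq_add_delta k n M p hp1 x (by rw [hlast, hp2])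
    have hadj : (ZcubeK k n).Adj x z := hcm ▸ adj_cmove k n p (by omega) x
    have hlz : lastBits' k n z = g := by
      rw [hzdef, lastBits'_add, hlast, lastBits'_delta k n M p hp1, add_zero]
    have hrec := ihp z g hlz (fun q hq => hP q (by simp [hq]))
    have hendeq : z + sumDelta k n M P = x + sumDelta k n M (p :: P) := by
      rw [hzdef, sumDelta]; abel
    calc (ZcubeK k n).edist x (x + sumDelta k n M (p :: P))
        ≤ (ZcubeK k n).edist x z + (ZcubeK k n).edist z (x + sumDelta k n M (p :: P)) :=
          SimpleGraph.edist_triangle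
      _ ≤ 1 + P.length := by
          refine add_le_add (adj_edist_le_one hadj) ?_
          rw [← hendeq]; exact hrec
      _ = ((p :: P).length : ℕ∞) := by
          rw [List.length_cons]
          push_cast
          ring

lemma sumDelta_filter (P : List ℕ) (q : ℕ → Prop) [DecidablePred q] :
    sumDelta k n M P =
      sumDelta k n M (P.filter (fun p => decide (q p))) +
      sumDelta k n M (P.filter (fun p => !decide (q p))) := by
  induction P with
  | nil => simp [sumDelta]
  | cons p P ihp =>
    by_cases hq : q p
    · rw [List.filter_cons_of_pos (by simp [hq]), List.filter_cons_of_neg (by simp [hq]),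
        sumDelta, sumDelta, ihp]
      abel
    · rw [List.filter_cons_of_neg (by simp [hq]), List.filter_cons_of_pos (by simp [hq]),
        sumDelta, sumDelta, ihp]
      abel

lemma length_filter_split (P : List ℕ) (q : ℕ → Prop) [DecidablePred q] :
    (P.filter (fun p => decide (q p))).length +
    (P.filter (fun p => !decide (q p))).length = P.length := by
  induction P with
  | nil => simp
  | cons p P ihp =>
    by_cases hq : q p
    · rw [List.filter_cons_of_pos (by simp [hq]), List.filter_cons_of_neg (by simp [hq])]
      simp only [List.length_cons]
      omega
    · rw [List.filter_cons_of_neg (by simp [hq]), List.filter_cons_of_pos (by simp [hq])]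
      simp only [List.length_cons]
      omega

lemma GP2 (hk : 2*k + 2 ≤ n) : ∀ (L : List (Fin k → ZMod 2)) (g : Fin k → ZMod 2)
    (P : List ℕ) (x : Fin n → ZMod 2),
    List.Chain' (Step k) (g :: L) → lastBits' k n x = g →
    (∀ p ∈ P, p + 2*k + 2 ≤ n ∧ M p ∈ g :: L) →
    ∃ w : Fin n → ZMod 2, (∀ i : Fin n, (i:ℕ) + k < n → w i = 0) ∧
      (ZcubeK k n).edist x (x + sumDelta k n M P + w) ≤ P.length + L.length := by
  intro L
  induction L with
  | nil =>
    intro g P x _ hlast hP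
    refine ⟨0, fun i _ => rfl, ?_⟩
    rw [add_zero]
    have := GP1 k n M P x g hlast (fun p hp => ⟨(hP p hp).1, by simpa using (hP p hp).2⟩)
    simpa using this
  | cons g' L' ihL =>
    intro g P x hchain hlast hP
    classical
    set P1 := P.filter (fun p => decide (M p = g)) with hP1def
    set P2 := P.filter (fun p => !decide (M p = g)) with hP2def
    have hP1mem : ∀ p ∈ P1, p ∈ P := fun p hp => List.mem_of_mem_filter hp
    have hP2mem : ∀ p ∈ P2, p ∈ P := fun p hp => List.mem_of_mem_filter hp
    -- phase 1
    set z := x + sumDelta k n M P1 with hzdef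
    have hz1 : (ZcubeK k n).edist x z ≤ P1.length := by
      refine GP1 k n M P1 x g hlast (fun p hp => ⟨(hP p (hP1mem p hp)).1, ?_⟩)
      have := List.of_mem_filter hp
      simpa using this
    have hlz : lastBits' k n z = g := by
      rw [hzdef, lastBits'_add, hlast,
        lastBits'_sumDelta k n M P1 (fun p hp => (hP p (hP1mem p hp)).1), add_zero]
    -- flip step
    obtain ⟨hstep, hchain'⟩ := List.isChain_cons_cons.mp hchain
    obtain ⟨j, hj⟩ := hstep
    set z2 := z + eflip k n j with hz2def
    have hcm : cmove k n (n - k + j.val) z = z2 := cmove_eq_add_eflip k n j hk z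
    have hadj : (ZcubeK k n).Adj z z2 := hcm ▸ adj_cmove k n _ (by have := j.isLt; omega) z
    have hlz2 : lastBits' k n z2 = g' := by
      rw [hz2def, lastBits'_add, hlz, lastBits'_eflip k n j hk, ← hj]
    -- recurse
    obtain ⟨w', hw'supp, hw'⟩ := ihL g' P2 z2 hchain' hlz2 (fun p hp => by
      refine ⟨(hP p (hP2mem p hp)).1, ?_⟩
      have h2 := (hP p (hP2mem p hp)).2
      have h3 : ¬ (M p = g) := by simpa using List.of_mem_filter hp
      rcases List.mem_cons.mp h2 with h | h
      · exact absurd h h3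
      · exact h)
    refine ⟨eflip k n j + w', ?_, ?_⟩
    · intro i hi
      have h1 : eflip k n j i = 0 := by
        rw [eflip, if_neg (by have := j.isLt; omega)]
      have h2 : w' i = 0 := hw'supp i hi
      rw [Pi.add_apply, h1, h2, add_zero]
    · have hendeq : z2 + sumDelta k n M P2 + w' =
          x + sumDelta k n M P + (eflip k n j + w') := by
        rw [hz2def, hzdef, sumDelta_filter k n M P (fun p => M p = g)]
        abel
      calc (ZcubeK k n).edist x (x + sumDelta k n M P + (eflip k n j + w'))
          ≤ (ZcubeK k n).edist x z +
            (ZcubeK k n).edist z (x + sumDelta k n M P + (eflip k n j + w')) :=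
            SimpleGraph.edist_triangle
        _ ≤ (ZcubeK k n).edist x z + ((ZcubeK k n).edist z z2 +
            (ZcubeK k n).edist z2 (x + sumDelta k n M P + (eflip k n j + w'))) := by
            exact add_le_add le_rfl SimpleGraph.edist_triangle
        _ ≤ (P1.length : ℕ∞) + (1 + (P2.length + L'.length)) := by
            refine add_le_add hz1 (add_le_add (adj_edist_le_one hadj) ?_)
            rw [← hendeq]
            exact hw'
        _ = ((P.length + (g' :: L').length : ℕ) : ℕ∞) := by
            have hsplit : P1.length + P2.length = P.length :=
              length_filter_split P (fun p => M p = g)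
            rw [List.length_cons, ← hsplit]
            push_cast
            ring

lemma zmod2_add_self (a : ZMod 2) : a + a = 0 := by revert a; decide

def grayL : (k : ℕ) → List (Fin k → ZMod 2)
  | 0 => [fun _ => 0]
  | k+1 => (grayL k).map (Fin.cons 0) ++ ((grayL k).map (Fin.cons 1)).reverse

lemma grayL_length : ∀ k, (grayL k).length = 2^k := by
  intro k
  induction k with
  | zero => rfl
  | succ k ih => simp [grayL, ih]; ring

lemma grayL_ne_nil (k : ℕ) : grayL k ≠ [] := by
  intro h
  have h1 := grayL_length k
  rw [h] at h1
  have h2 : (0:ℕ) < 2^k := Nat.pow_pos (by norm_num)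
  simp at h1
  omega

lemma grayL_mem : ∀ k (g : Fin k → ZMod 2), g ∈ grayL k := by
  intro k
  induction k with
  | zero =>
    intro g
    have : g = (fun _ => 0) := funext fun i => i.elim0
    rw [this, grayL]
    simp
  | succ k ih =>
    intro g
    have hg : g = Fin.cons (g 0) (Fin.tail g) := (Fin.cons_self_tail g).symm
    have h2 : ∀ a : ZMod 2, a = 0 ∨ a = 1 := by decide
    rw [grayL, List.mem_append]
    rcases h2 (g 0) with h | h
    · left
      rw [List.mem_map]
      exact ⟨Fin.tail g, ih _, by rw [← h, ← hg]⟩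
    · right
      rw [List.mem_reverse, List.mem_map]
      exact ⟨Fin.tail g, ih _, by rw [← h, ← hg]⟩

lemma step_symm {k : ℕ} {g g' : Fin k → ZMod 2} (h : Step k g g') : Step k g' g := by
  obtain ⟨j, hj⟩ := h
  refine ⟨j, ?_⟩
  rw [hj]
  funext i
  simp only [Pi.add_apply]
  rw [add_assoc, zmod2_add_self, add_zero]

lemma step_cons {k : ℕ} {g g' : Fin k → ZMod 2} (b : ZMod 2) (h : Step k g g') :
    Step (k+1) (Fin.cons b g) (Fin.cons b g') := by
  obtain ⟨j, hj⟩ := h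
  refine ⟨j.succ, ?_⟩
  funext i
  induction i using Fin.cases with
  | zero =>
    simp only [Pi.add_apply, Fin.cons_zero, unitv]
    rw [if_neg (Fin.succ_ne_zero j).symm, add_zero]
  | succ i =>
    simp only [Pi.add_apply, Fin.cons_succ, unitv, hj]
    congr 1
    by_cases h : i = j
    · rw [if_pos h, if_pos (by rw [h])]
    · rw [if_neg h, if_neg (fun hc => h (Fin.succ_inj.mp hc))]

lemma step_cons01 {k : ℕ} (t : Fin k → ZMod 2) :
    Step (k+1) (Fin.cons 0 t) (Fin.cons 1 t) := by
  refine ⟨0, ?_⟩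
  funext i
  induction i using Fin.cases with
  | zero => simp [unitv]
  | succ i =>
    simp only [Pi.add_apply, Fin.cons_succ, unitv]
    rw [if_neg (Fin.succ_ne_zero i), add_zero]

lemma grayL_chain : ∀ k, List.Chain' (Step k) (grayL k) := by
  intro k
  induction k with
  | zero => simp [grayL, List.Chain']
  | succ k ih =>
    rw [grayL, List.Chain', List.isChain_append]
    refine ⟨?_, ?_, ?_⟩
    · rw [List.isChain_map]
      exact List.IsChain.imp (fun a b h => step_cons 0 h) ih
    · rw [List.isChain_reverse, List.isChain_map]
      exact List.IsChain.imp (fun a b h => step_symm (step_cons 1 h)) ih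
    · intro a ha b hb
      rw [Option.mem_def, List.getLast?_map] at ha
      rw [Option.mem_def, List.head?_reverse, List.getLast?_map] at hb
      obtain ⟨t, ht, hat⟩ := Option.map_eq_some_iff.mp ha
      obtain ⟨t', ht', hbt⟩ := Option.map_eq_some_iff.mp hb
      rw [ht] at ht'
      obtain rfl : t = t' := by injection ht'
      rw [← hat, ← hbt]
      exact step_cons01 t

lemma step_translate {k : ℕ} {g g' c : Fin k → ZMod 2} (h : Step k g g') :
    Step k (g + c) (g' + c) := by
  obtain ⟨j, hj⟩ := h
  exact ⟨j, by rw [hj]; abel⟩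

lemma sumDelta_eq_zero (P : List ℕ) (i : Fin n)
    (h : ∀ p ∈ P, ¬(p ≤ (i:ℕ) ∧ (i:ℕ) ≤ p + k)) : sumDelta k n M P i = 0 := by
  induction P with
  | nil => rfl
  | cons a P ihp =>
    have ha := h a (by simp)
    have hd : delta k n M a i = 0 := by
      rw [delta, if_neg (by omega), dif_neg (by omega)]
    rw [sumDelta, Pi.add_apply, hd, zero_add]
    exact ihp (fun p hp => h p (by simp [hp]))

lemma sumDelta_eq_delta (P : List ℕ) (hpair : List.Pairwise (fun a b => a + k < b) P)
    (p : ℕ) (hp : p ∈ P) (i : Fin n) (h1 : p ≤ (i:ℕ)) (h2 : (i:ℕ) ≤ p + k) :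
    sumDelta k n M P i = delta k n M p i := by
  induction P with
  | nil => simp at hp
  | cons a P ihp =>
    rcases List.mem_cons.mp hp with rfl | hmem
    · rw [sumDelta, Pi.add_apply]
      have hz : sumDelta k n M P i = 0 := by
        refine sumDelta_eq_zero k n M P i (fun p' hp' => ?_)
        have := (List.pairwise_cons.mp hpair).1 p' hp'
        omega
      rw [hz, add_zero]
    · have hgap := (List.pairwise_cons.mp hpair).1 p hmem
      rw [sumDelta, Pi.add_apply]
      have hd : delta k n M a i = 0 := by
        rw [delta, if_neg (by omega), dif_neg (by omega)]
      rw [hd, zero_add]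
      exact ihp (List.pairwise_cons.mp hpair).2 hmem

lemma cover_aux (D : Fin n → ZMod 2) : ∀ (s q : ℕ), n - q ≤ s →
    ∃ P : List ℕ,
      (∀ p ∈ P, q ≤ p ∧ p + 2*k + 2 ≤ n ∧ ∃ h : p < n, D ⟨p, h⟩ = 1) ∧
      List.Pairwise (fun a b => a + k < b) P ∧
      (∀ j (hj : j < n), q ≤ j → j + 2*k + 2 ≤ n → D ⟨j, hj⟩ ≠ 0 →
        ∃ p ∈ P, p ≤ j ∧ j ≤ p + k) ∧
      (k+1) * P.length ≤ n - q := by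
  intro s
  induction s with
  | zero =>
    intro q hq
    refine ⟨[], by simp, by simp, ?_, by simp⟩
    intro j hj hqj h2 _
    omega
  | succ s ihs =>
    intro q hq
    classical
    set S := Finset.univ.filter
      (fun i : Fin n => q ≤ (i:ℕ) ∧ (i:ℕ) + 2*k + 2 ≤ n ∧ D i ≠ 0) with hS
    by_cases hSe : S.Nonempty
    case neg =>
      refine ⟨[], by simp, by simp, ?_, by simp⟩
      intro j hj hqj h2 hD
      exact absurd ⟨⟨j, hj⟩, by rw [hS, Finset.mem_filter]; exact ⟨Finset.mem_univ _, hqj, h2, hD⟩⟩ hSe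
    case pos =>
      set i0 := S.min' hSe with hi0
      have hi0mem : i0 ∈ S := S.min'_mem hSe
      have hi0p : q ≤ (i0:ℕ) ∧ (i0:ℕ) + 2*k + 2 ≤ n ∧ D i0 ≠ 0 := by
        have := hi0mem
        rw [hS, Finset.mem_filter] at this
        exact this.2
      have hi0n : (i0:ℕ) < n := i0.isLt
      obtain ⟨P', hP'1, hP'2, hP'3, hP'4⟩ := ihs ((i0:ℕ) + k + 1) (by omega)
      refine ⟨(i0:ℕ) :: P', ?_, ?_, ?_, ?_⟩
      · intro p hp
        rcases List.mem_cons.mp hp with rfl | hmem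
        · exact ⟨hi0p.1, hi0p.2.1, i0.isLt, by
            rcases (by decide : ∀ a : ZMod 2, a = 0 ∨ a = 1) (D i0) with h | h
            · exact absurd h hi0p.2.2
            · rw [← h]⟩
        · have := hP'1 p hmem
          exact ⟨by omega, this.2.1, this.2.2⟩
      · rw [List.pairwise_cons]
        exact ⟨fun p hp => by have := (hP'1 p hp).1; omega, hP'2⟩
      · intro j hj hqj h2 hD
        have hj_mem : (⟨j, hj⟩ : Fin n) ∈ S := by
          rw [hS, Finset.mem_filter]
          exact ⟨Finset.mem_univ _, hqj, h2, hD⟩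
        have hij : (i0:ℕ) ≤ j := S.min'_le _ hj_mem
        rcases le_or_gt j ((i0:ℕ) + k) with h | h
        · exact ⟨(i0:ℕ), by simp, hij, h⟩
        · obtain ⟨p, hp, hp1, hp2⟩ := hP'3 j hj (by omega) h2 hD
          exact ⟨p, by simp [hp], hp1, hp2⟩
      · rw [List.length_cons]
        have : (k+1) * (P'.length + 1) = (k+1) * P'.length + (k+1) := by ring
        omega

lemma cover (D : Fin n → ZMod 2) (q : ℕ) :
    ∃ P : List ℕ,
      (∀ p ∈ P, q ≤ p ∧ p + 2*k + 2 ≤ n ∧ ∃ h : p < n, D ⟨p, h⟩ = 1) ∧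
      List.Pairwise (fun a b => a + k < b) P ∧
      (∀ j (hj : j < n), q ≤ j → j + 2*k + 2 ≤ n → D ⟨j, hj⟩ ≠ 0 →
        ∃ p ∈ P, p ≤ j ∧ j ≤ p + k) ∧
      (k+1) * P.length ≤ n - q :=
  cover_aux k n D n q (by omega)

lemma zmod2_eq_of_add_eq_zero {a b : ZMod 2} (h : a + b = 0) : a = b := by
  revert h; revert a b; decide

theorem edist_le_main (x y : Fin n → ZMod 2) :
    (ZcubeK k n).edist x y ≤ ((n/(k+1) + (2^k - 1) + (2*k + 1) : ℕ) : ℕ∞) := by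
  classical
  by_cases hn : 2*k + 2 ≤ n
  case neg =>
    have h1 : (ZcubeK k n).edist x y ≤ (n : ℕ∞) := by
      refine edist_le_of_agree k n n x y (fun i hi => ?_)
      omega
    refine h1.trans ?_
    have h3 : n ≤ 2*k+1 := by omega
    have h2 : n ≤ n/(k+1) + (2^k - 1) + (2*k + 1) :=
      h3.trans (Nat.le_add_left _ _)
    exact Nat.cast_le.mpr h2
  case pos =>
    set D : Fin n → ZMod 2 := fun i => x i + y i with hD
    set M : ℕ → Fin k → ZMod 2 :=
      fun p j => if h : p+1+(j:ℕ) < n then D ⟨p+1+(j:ℕ), h⟩ else 0 with hM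
    obtain ⟨P, hP1, hP2, hP3, hP4⟩ := cover k n D 0
    -- gray list
    obtain ⟨g0, L0, hgl⟩ := List.exists_cons_of_ne_nil (grayL_ne_nil k)
    set c : Fin k → ZMod 2 := g0 + lastBits' k n x with hc
    have hmapped : (grayL k).map (· + c) = (g0 + c) :: L0.map (· + c) := by
      rw [hgl]; rfl
    have hheadc : g0 + c = lastBits' k n x := by
      rw [hc]; funext i
      simp only [Pi.add_apply]
      rw [← add_assoc, zmod2_add_self, zero_add]
    have hchain : List.Chain' (Step k) ((g0 + c) :: L0.map (· + c)) := by
      rw [← hmapped, List.Chain', List.isChain_map]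
      exact List.IsChain.imp (fun a b h => step_translate h) (grayL_chain k)
    have hmem : ∀ g : Fin k → ZMod 2, g ∈ (g0 + c) :: L0.map (· + c) := by
      intro g
      rw [← hmapped, List.mem_map]
      refine ⟨g + c, grayL_mem k _, ?_⟩
      funext i
      simp only [Pi.add_apply]
      rw [add_assoc, zmod2_add_self, add_zero]
    obtain ⟨w, hwsupp, hwdist⟩ := GP2 k n M hn (L0.map (· + c)) (g0 + c) P x hchain
      hheadc.symm (fun p hp => ⟨(hP1 p hp).2.1, hmem _⟩)
    set x' := x + sumDelta k n M P + w with hx'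
    have hagree : ∀ i : Fin n, (i:ℕ) < n - (2*k+1) → x' i = y i := by
      intro i hi
      have hibound : (i:ℕ) + 2*k + 2 ≤ n := by omega
      have hwi : w i = 0 := hwsupp i (by omega)
      rw [hx']
      simp only [Pi.add_apply]
      rw [hwi, add_zero]
      by_cases hcov : ∃ p ∈ P, p ≤ (i:ℕ) ∧ (i:ℕ) ≤ p + k
      · obtain ⟨p, hp, hp1, hp2⟩ := hcov
        rw [sumDelta_eq_delta k n M P hP2 p hp i hp1 hp2]
        have hdD : delta k n M p i = D i := by
          rw [delta]
          by_cases hip : (i:ℕ) = p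
          · rw [if_pos hip]
            obtain ⟨hpn, hDp⟩ := (hP1 p hp).2.2
            have : D i = 1 := by
              have : i = ⟨p, hpn⟩ := Fin.ext hip
              rw [this, hDp]
            rw [this]
          · rw [if_neg hip, dif_pos (by omega)]
            rw [hM]
            simp only []
            rw [dif_pos (by omega : p+1+((i:ℕ)-p-1) < n)]
            exact congrArg D (Fin.ext (by simp only []; omega))
        rw [hdD, hD]
        simp only []
        rw [show x i + (x i + y i) = (x i + x i) + y i from by ring, zmod2_add_self, zero_add]
      · push_neg at hcov
        rw [sumDelta_eq_zero k n M P i (fun p hp h => by have := hcov p hp h.1; omega), add_zero]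
        have hDi : D i = 0 := by
          by_contra hDi
          obtain ⟨p, hp, hp1, hp2⟩ := hP3 (i:ℕ) i.isLt (by omega) hibound
            (by rw [show (⟨(i:ℕ), i.isLt⟩ : Fin n) = i from Fin.ext rfl]; exact hDi)
          have := hcov p hp hp1
          omega
        exact zmod2_eq_of_add_eq_zero hDi
    have hdist2 : (ZcubeK k n).edist x' y ≤ ((2*k+1 : ℕ) : ℕ∞) :=
      edist_le_of_agree k n (2*k+1) x' y hagree
    have hlen : (L0.map (· + c)).length = 2^k - 1 := by
      rw [List.length_map]
      have := grayL_length k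
      rw [hgl] at this
      simp only [List.length_cons] at this
      omega
    have hPlen : P.length ≤ n/(k+1) := by
      rw [Nat.le_div_iff_mul_le (by omega : 0 < k+1)]
      calc P.length * (k+1) = (k+1) * P.length := Nat.mul_comm _ _
        _ ≤ n := by omega
    calc (ZcubeK k n).edist x y
        ≤ (ZcubeK k n).edist x x' + (ZcubeK k n).edist x' y := SimpleGraph.edist_triangle
      _ ≤ ((P.length : ℕ∞) + ((L0.map (· + c)).length : ℕ∞)) + ((2*k+1 : ℕ) : ℕ∞) :=
          add_le_add hwdist hdist2
      _ ≤ ((n/(k+1) + (2^k - 1) + (2*k + 1) : ℕ) : ℕ∞) := by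
          rw [hlen, ← Nat.cast_add, ← Nat.cast_add]
          refine Nat.cast_le.mpr ?_
          omega

end T2

lemma diam_le_nat (k n : ℕ) :
    (ZcubeK k n).diam ≤ n/(k+1) + (2^k - 1) + (2*k+1) := by
  have h := SimpleGraph.ediam_le_of_edist_le (G := ZcubeK k n)
    (fun u v => edist_le_main k n u v)
  have h2 := ENat.toNat_le_toNat h (by
    exact_mod_cast ENat.coe_ne_top _)
  simpa only [ENat.toNat_coe, SimpleGraph.diam] using h2

lemma diam_le_n (k n : ℕ) : (ZcubeK k n).diam ≤ n := by
  have h := SimpleGraph.ediam_le_of_edist_le (G := ZcubeK k n)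
    (fun u v => edist_le_of_agree k n n u v (fun i hi => by omega))
  have h2 := ENat.toNat_le_toNat h (by exact_mod_cast ENat.coe_ne_top _)
  simpa only [ENat.toNat_coe, SimpleGraph.diam] using h2

lemma diam_real_le (k n : ℕ) :
    ((ZcubeK k n).diam : ℝ) ≤ (n:ℝ)/((k:ℝ)+1) + 2^k + 2*(k:ℝ) := by
  have h := diam_le_nat k n
  have h2 : ((ZcubeK k n).diam : ℝ) ≤ ((n/(k+1) + (2^k - 1) + (2*k+1) : ℕ) : ℝ) :=
    Nat.cast_le.mpr h
  refine h2.trans ?_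
  have hdiv : ((n/(k+1) : ℕ) : ℝ) ≤ (n:ℝ)/((k:ℝ)+1) := by
    have := Nat.cast_div_le (m := n) (n := k+1) (α := ℝ)
    push_cast at this
    exact this
  have hpow : (((2^k - 1 : ℕ)) : ℝ) = (2:ℝ)^k - 1 := by
    have h1 : 1 ≤ 2^k := Nat.one_le_two_pow
    push_cast [Nat.cast_sub h1]
    ring
  push_cast
  rw [hpow]
  push_cast at hdiv
  linarith

lemma four_mul_le_two_pow : ∀ k : ℕ, 4 ≤ k → 4*k ≤ 2^k := by
  intro k hk
  induction k with
  | zero => omega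
  | succ m ih =>
    rcases Nat.lt_or_ge m 4 with h | h
    · interval_cases m <;> simp_all <;> omega
    · have h1 := ih (by omega)
      have h2 : 4 ≤ 2^m := by
        calc 4 = 2^2 := rfl
        _ ≤ 2^m := Nat.pow_le_pow_right (by norm_num) (by omega)
      have : 2^(m+1) = 2^m + 2^m := by ring
      omega

set_option maxHeartbeats 2000000 in
lemma part1 (n : ℕ) (hpos : 0 < Real.logb 2 n - 2 * Real.logb 2 (Real.logb 2 n) - 1) :
    ((ZcubeK (kappa n) n).diam : ℝ) ≤
      (1 + (2 * Real.logb 2 (Real.logb 2 n) + 1) /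
            (Real.logb 2 n - 2 * Real.logb 2 (Real.logb 2 n) - 1) +
          1 / Real.logb 2 n) * ((n : ℝ) / Real.logb 2 n) := by
  have hn2 : 2 ≤ n := by
    by_contra hc
    push_neg at hc
    interval_cases n <;>
      simp only [Nat.cast_zero, Nat.cast_one, Real.logb_zero, Real.logb_one] at hpos <;>
      linarith
  set L := Real.logb 2 (n:ℝ) with hLdef
  set l := Real.logb 2 L with hldef
  have hnR : (2:ℝ) ≤ (n:ℝ) := by exact_mod_cast hn2
  have hnpos : (0:ℝ) < n := by linarith
  have hL1 : 1 ≤ L := by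
    rw [hLdef, show (1:ℝ) = Real.logb 2 2 from (Real.logb_self_eq_one (by norm_num)).symm]
    exact Real.logb_le_logb_of_le (by norm_num) (by norm_num) hnR
  have hl0 : 0 ≤ l := Real.logb_nonneg (by norm_num) hL1
  set c := L - 2*l with hcdef
  have hc1 : 1 < c := by linarith
  have hceil : (1:ℤ) < ⌈c⌉ := by
    rw [Int.lt_ceil]
    exact_mod_cast hc1
  set k := kappa n with hkdef
  have hkval : k = Int.toNat ⌈c⌉ := by
    rw [hkdef, kappa, if_neg (by omega)]
    rw [max_eq_right (by omega : 1 ≤ Int.toNat ⌈c⌉)]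
  have hkR : (k:ℝ) = ((⌈c⌉ : ℤ) : ℝ) := by
    rw [hkval]
    exact_mod_cast congrArg (Int.cast : ℤ → ℝ) (Int.toNat_of_nonneg (by omega))
  have hkc : c ≤ (k:ℝ) := by rw [hkR]; exact Int.le_ceil c
  have hkc1 : (k:ℝ) ≤ c + 1 := by
    rw [hkR]
    have := Int.ceil_lt_add_one c
    linarith
  have hk2 : 2 ≤ k := by rw [hkval]; omega
  clear_value k
  have hn_eq : (2:ℝ) ^ L = (n:ℝ) := Real.rpow_logb (by norm_num) (by norm_num) hnpos
  have hL_eq : (2:ℝ) ^ l = L := Real.rpow_logb (by norm_num) (by norm_num) (by linarith)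
  have hL2eq : (2:ℝ) ^ (2*l) = L^2 := by
    rw [show 2*l = l*(2:ℕ) from by push_cast; ring, Real.rpow_mul (by norm_num) l (2:ℕ),
      Real.rpow_natCast, hL_eq]
  have h2c : (2:ℝ)^c = (n:ℝ) / L^2 := by
    rw [hcdef, Real.rpow_sub (by norm_num), hn_eq, hL2eq]
  have hLpos : (0:ℝ) < L := by linarith
  have hL2pos : (0:ℝ) < L^2 := by positivity
  have hcm1 : (0:ℝ) < c - 1 := by linarith
  have hRHS : (1 + (2*l + 1)/(c - 1) + 1/L) * ((n:ℝ)/L) = (n:ℝ)/(c-1) + (n:ℝ)/L^2 := by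
    have hLne : L ≠ 0 := ne_of_gt hLpos
    have hcne : c - 1 ≠ 0 := ne_of_gt hcm1
    field_simp
    ring
  rw [hRHS]
  have hdiam : ((ZcubeK k n).diam : ℝ) ≤ (n:ℝ)/((k:ℝ)+1) + 2^k + 2*(k:ℝ) := diam_real_le k n
  rcases le_or_gt c 2 with hcase | hcase
  · -- small c : use diam ≤ n
    have hd2 : ((ZcubeK k n).diam : ℝ) ≤ (n:ℝ) := by
      have := diam_le_n k n
      exact_mod_cast Nat.cast_le.mpr this
    have h1 : (n:ℝ) ≤ (n:ℝ)/(c-1) := by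
      rw [le_div_iff₀ hcm1]
      nlinarith
    have h2 : (0:ℝ) ≤ (n:ℝ)/L^2 := by positivity
    linarith
  · -- c > 2
    have hk3 : 3 ≤ k := by
      have : (2:ℤ) < ⌈c⌉ := by rw [Int.lt_ceil]; exact_mod_cast hcase
      rw [hkval]; omega
    have hL2' : 2 < L := by linarith
    have hl1 : 1 < l := by
      rw [hldef, show (1:ℝ) = Real.logb 2 2 from (Real.logb_self_eq_one (by norm_num)).symm]
      exact Real.logb_lt_logb (by norm_num) (by norm_num) hL2'
    have hL4 : 4 < L := by linarith
    have hlogb4 : Real.logb 2 (4:ℝ) = 2 := by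
      rw [show (4:ℝ) = (2:ℝ)^(2:ℝ) from by
        rw [show (2:ℝ)^(2:ℝ) = (2:ℝ)^(2:ℕ) from Real.rpow_natCast 2 2]; norm_num]
      exact Real.logb_rpow (by norm_num) (by norm_num)
    have hl2 : 2 < l := by
      rw [hldef]
      calc (2:ℝ) = Real.logb 2 4 := hlogb4.symm
        _ < Real.logb 2 L := Real.logb_lt_logb (by norm_num) (by norm_num) hL4
    have hL6 : 6 < L := by linarith
    have hn64 : 64 < (n:ℝ) := by
      rw [← hn_eq]
      calc (64:ℝ) = (2:ℝ)^(6:ℝ) := by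
            rw [show (2:ℝ)^(6:ℝ) = (2:ℝ)^(6:ℕ) from Real.rpow_natCast 2 6]; norm_num
        _ < 2^L := by
            rw [Real.rpow_lt_rpow_left_iff (by norm_num : (1:ℝ) < 2)]
            exact hL6
    have hk1L : (k:ℝ) + 1 ≤ L := by linarith
    have hkpos : (0:ℝ) < (k:ℝ) + 1 := by positivity
    have hprod : (c-1) * ((k:ℝ)+1) ≤ L^2 := by nlinarith
    have hslack : (n:ℝ)/((k:ℝ)+1) + 2*((n:ℝ)/L^2) ≤ (n:ℝ)/(c-1) := by
      have t1 : 1/(c-1) - 1/((k:ℝ)+1) = (((k:ℝ)+1) - (c-1))/((c-1)*((k:ℝ)+1)) := by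
        field_simp
      have t2 : (2:ℝ) ≤ ((k:ℝ)+1) - (c-1) := by linarith
      have t3 : (2:ℝ)/((c-1)*((k:ℝ)+1)) ≤ (((k:ℝ)+1) - (c-1))/((c-1)*((k:ℝ)+1)) := by
        have hden : (0:ℝ) < (c-1)*((k:ℝ)+1) := by positivity
        gcongr
      have t4 : (2:ℝ)/L^2 ≤ 2/((c-1)*((k:ℝ)+1)) := by
        have hden : (0:ℝ) < (c-1)*((k:ℝ)+1) := by positivity
        gcongr
      have e1 : 1/((k:ℝ)+1) + 2/L^2 ≤ 1/(c-1) := by linarith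
      have e2 := mul_le_mul_of_nonneg_left e1 hnpos.le
      calc (n:ℝ)/((k:ℝ)+1) + 2*((n:ℝ)/L^2) = (n:ℝ) * (1/((k:ℝ)+1) + 2/L^2) := by ring
        _ ≤ (n:ℝ) * (1/(c-1)) := e2
        _ = (n:ℝ)/(c-1) := by ring
    rcases Nat.lt_or_ge k 4 with hk4 | hk4
    · -- k = 3
      have hk3e : k = 3 := by omega
      have hkR3 : (k:ℝ) = 3 := by rw [hk3e]; norm_num
      have hc3 : c ≤ 3 := by linarith only [hkc, hkR3]
      have hp8 : (2:ℝ)^(k:ℕ) = 8 := by rw [hk3e]; norm_num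
      have hq4 : (n:ℝ)/((k:ℝ)+1) = (n:ℝ)/4 := by rw [hkR3]; norm_num
      have hinv : 1/(2:ℝ) ≤ 1/(c-1) :=
        one_div_le_one_div_of_le hcm1 (by linarith only [hc3])
      have hb2 : (n:ℝ)/2 ≤ (n:ℝ)/(c-1) := by
        calc (n:ℝ)/2 = (n:ℝ)*(1/2) := by ring
          _ ≤ (n:ℝ)*(1/(c-1)) := mul_le_mul_of_nonneg_left hinv hnpos.le
          _ = (n:ℝ)/(c-1) := by ring
      have h2 : (0:ℝ) ≤ (n:ℝ)/L^2 := by positivity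
      rw [hq4, hp8, hkR3] at hdiam
      linarith only [hdiam, hb2, h2, hn64]
    · -- k ≥ 4
      have hck : (k:ℝ) - 1 ≤ c := by linarith
      have h2k1 : (2:ℝ)^((k:ℝ)-1) ≤ (2:ℝ)^c := by
        rw [Real.rpow_le_rpow_left_iff (by norm_num : (1:ℝ) < 2)]
        exact hck
      have hpow : (2:ℝ)^((k:ℝ)-1) = (2:ℝ)^(k:ℕ)/2 := by
        rw [Real.rpow_sub (by norm_num), Real.rpow_one, Real.rpow_natCast]
      have h4k : (4*(k:ℝ)) ≤ (2:ℝ)^(k:ℕ) := by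
        exact_mod_cast Nat.cast_le.mpr (four_mul_le_two_pow k hk4)
      have hmain : (2:ℝ)^(k:ℕ) + 2*(k:ℝ) ≤ 3*((n:ℝ)/L^2) := by
        have hh : (2:ℝ)^(k:ℕ) + 2*(k:ℝ) ≤ (3/2)*(2:ℝ)^(k:ℕ) := by linarith
        have h3 : (3/2:ℝ)*(2:ℝ)^(k:ℕ) = 3 * ((2:ℝ)^(k:ℕ)/2) := by ring
        calc (2:ℝ)^(k:ℕ) + 2*(k:ℝ) ≤ (3/2)*(2:ℝ)^(k:ℕ) := hh
          _ = 3 * ((2:ℝ)^(k:ℕ)/2) := h3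
          _ = 3 * (2:ℝ)^((k:ℝ)-1) := by rw [hpow]
          _ ≤ 3 * (2:ℝ)^c := by linarith
          _ = 3*((n:ℝ)/L^2) := by rw [h2c]
      linarith

open Filter in
set_option maxHeartbeats 1000000 in
lemma part2 (ε : ℝ) (hε : 0 < ε) :
    ∀ᶠ n : ℕ in Filter.atTop,
      ((ZcubeK (kappa n) n).diam : ℝ) ≤ (1 + ε) * ((n : ℝ) / Real.logb 2 n) := by
  have hLt : Tendsto (fun n : ℕ => Real.logb 2 (n:ℝ)) atTop atTop :=
    (Real.tendsto_logb_atTop (by norm_num : (1:ℝ) < 2)).comp tendsto_natCast_atTop_atTop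
  have hlog_div : Tendsto (fun t : ℝ => Real.logb 2 t / t) atTop (nhds 0) := by
    have h := Real.isLittleO_log_id_atTop.tendsto_div_nhds_zero
    have heq : (fun t : ℝ => Real.logb 2 t / t) =
        fun t => (Real.log t / id t) * (1/Real.log 2) := by
      funext t; simp only [Real.logb, id]; ring
    rw [heq]
    simpa using h.mul_const (1/Real.log 2)
  set m := min (1/8 : ℝ) (ε/16) with hmdef
  have hm0 : 0 < m := lt_min (by norm_num) (by positivity)
  have hm8 : m ≤ 1/8 := min_le_left _ _
  have hm16 : m ≤ ε/16 := min_le_right _ _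
  have hev1 : ∀ᶠ n : ℕ in atTop,
      Real.logb 2 (Real.logb 2 (n:ℝ)) / Real.logb 2 (n:ℝ) < m :=
    (hlog_div.comp hLt).eventually_lt_const hm0
  have hbinv : Tendsto (fun n : ℕ => 1 / Real.logb 2 (n:ℝ)) atTop (nhds 0) := by
    simpa [one_div, Function.comp_def] using tendsto_inv_atTop_zero.comp hLt
  have hev2 : ∀ᶠ n : ℕ in atTop, 1 / Real.logb 2 (n:ℝ) < m :=
    hbinv.eventually_lt_const hm0
  have hev3 : ∀ᶠ n : ℕ in atTop, 2 < Real.logb 2 (n:ℝ) :=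
    hLt.eventually_gt_atTop 2
  filter_upwards [hev1, hev2, hev3] with n h1 h2 h3
  set L := Real.logb 2 (n:ℝ) with hLdef
  set l := Real.logb 2 L with hldef
  have hLpos : 0 < L := by linarith
  have hmL : l < m * L := by
    rw [div_lt_iff₀ hLpos] at h1
    linarith
  have h1L : 1 < m * L := by
    rw [div_lt_iff₀ hLpos] at h2
    linarith
  have hmlL : m * L ≤ L/8 := by
    have := mul_le_mul_of_nonneg_right hm8 hLpos.le
    linarith
  have hden : L/2 ≤ L - 2*l - 1 := by linarith
  have hpos' : 0 < L - 2*l - 1 := by linarith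
  have hp1 := part1 n hpos'
  refine hp1.trans ?_
  have hmeL : m * L ≤ (ε/16)*L := mul_le_mul_of_nonneg_right hm16 hLpos.le
  have hb1 : (2*l+1)/(L-2*l-1) ≤ ε/2 := by
    rw [div_le_iff₀ hpos']
    have e2 : ε*(L/2) ≤ ε*(L-2*l-1) := mul_le_mul_of_nonneg_left hden hε.le
    nlinarith
  have hb2 : 1/L ≤ ε/2 := by
    have : 1/L < m := h2
    linarith
  have hfrac : (2*l+1)/(L-2*l-1) + 1/L ≤ ε := by linarith
  have hnL0 : 0 ≤ (n:ℝ)/L := by positivity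
  have := mul_le_mul_of_nonneg_right (by linarith :
    1 + (2*l+1)/(L-2*l-1) + 1/L ≤ 1 + ε) hnL0
  linarith

theorem zcubeK_star_diam' :
    (∀ n : ℕ, 0 < Real.logb 2 n - 2 * Real.logb 2 (Real.logb 2 n) - 1 →
      ((ZcubeK (kappa n) n).diam : ℝ) ≤
        (1 + (2 * Real.logb 2 (Real.logb 2 n) + 1) /
              (Real.logb 2 n - 2 * Real.logb 2 (Real.logb 2 n) - 1) +
            1 / Real.logb 2 n) * ((n : ℝ) / Real.logb 2 n)) ∧
    (∀ ε : ℝ, 0 < ε → ∀ᶠ n : ℕ in Filter.atTop,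
      ((ZcubeK (kappa n) n).diam : ℝ) ≤ (1 + ε) * ((n : ℝ) / Real.logb 2 n)) :=
  ⟨part1, part2⟩

/-- with `k = κ(n)`, the graph `Z*_n = Z_{n,κ(n)}` has diameter at most
`(1 + (2log₂log₂ n + 1)/(log₂ n − 2log₂log₂ n − 1) + 1/log₂ n) · n/log₂ n`, which is
`(1 + o(1)) · n/log₂ n`. -/
theorem zcubeK_star_diam :
    (∀ n : ℕ, 0 < Real.logb 2 n - 2 * Real.logb 2 (Real.logb 2 n) - 1 →
      ((ZcubeK (kappa n) n).diam : ℝ) ≤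
        (1 + (2 * Real.logb 2 (Real.logb 2 n) + 1) /
              (Real.logb 2 n - 2 * Real.logb 2 (Real.logb 2 n) - 1) +
            1 / Real.logb 2 n) * ((n : ℝ) / Real.logb 2 n)) ∧
    (∀ ε : ℝ, 0 < ε → ∀ᶠ n : ℕ in Filter.atTop,
      ((ZcubeK (kappa n) n).diam : ℝ) ≤ (1 + ε) * ((n : ℝ) / Real.logb 2 n)) := zcubeK_star_diam'
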